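/- Let K ⊆ ℝⁿ be a regular cone (i.e., K ∪ (−K) is a linear subspace of ℝⁿ) with dim(span K) ≥ 3. Let B₁, …, Bₘ (m ≥ 1) be real symmetric n×n matrices, each a real linear combination of fixed symmetric matrices A₁, A₂, A₃ satisfying s₁xᵀA₁x + s₂xᵀA₂x + s₃xᵀA₃x > 0 for all nonzero x ∈ K, for some s₁, s₂, s₃ ∈ ℝ. Then the following are equivalent: (i) max{xᵀB₁x, …, xᵀBₘx} ≥ 0 for all x ∈ K; (ii) there exists t in the simplex Δₘ = {t ∈ ℝ₊ᵐ : Σtᵢ = 1} such that Σᵢ tᵢ xᵀBᵢx ≥ 0 for all x ∈ K. -/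

import Mathlib

open Matrix

set_option linter.unusedTactic false
set_option linter.unreachableTactic false

namespace FEY

open Finset


variable {d : ℕ}

/-- The intersection of the unit sphere with the zero set of a diagonal quadratic form. -/
def sphQ (lam : Fin d → ℝ) : Set (Fin d → ℝ) :=
  {x | ∑ i, (x i)^2 = 1 ∧ ∑ i, lam i * (x i)^2 = 0}

lemma sphQ_neg_mem (lam : Fin d → ℝ) {x : Fin d → ℝ} (hx : x ∈ sphQ lam) :
    -x ∈ sphQ lam := by
  obtain ⟨h1, h2⟩ := hx
  constructor <;> simpa [neg_sq]

lemma joined_neg {S : Set (Fin d → ℝ)} (hS : ∀ x ∈ S, -x ∈ S) {a b : Fin d → ℝ}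
    (h : JoinedIn S a b) : JoinedIn S (-a) (-b) := by
  obtain ⟨γ, hγ⟩ := h
  exact ⟨γ.map continuous_neg, fun t => hS _ (hγ t)⟩

/-- Build a JoinedIn from a function on ℝ that works on `[0,1]`. -/
lemma joinedIn_of_fun {S : Set (Fin d → ℝ)} {p : ℝ → Fin d → ℝ} {u v : Fin d → ℝ}
    (hcont : ContinuousOn p (Set.Icc 0 1)) (h0 : p 0 = u) (h1 : p 1 = v)
    (hmem : ∀ t : ℝ, t ∈ Set.Icc (0:ℝ) 1 → p t ∈ S) : JoinedIn S u v := by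
  refine ⟨⟨⟨fun t => p t, ?_⟩, by simpa using h0, by simpa using h1⟩, fun t => hmem t t.2⟩
  exact hcont.comp_continuous continuous_subtype_val (fun t => t.2)

lemma conn_psd (lam : Fin d → ℝ) (hpsd : ∀ i, 0 ≤ lam i) {u v : Fin d → ℝ}
    (hu : u ∈ sphQ lam) (hv : v ∈ sphQ lam) :
    JoinedIn (sphQ lam) u v ∨ JoinedIn (sphQ lam) u (-v) := by
  classical
  have hterm : ∀ {x : Fin d → ℝ}, x ∈ sphQ lam → ∀ i, lam i * (x i)^2 = 0 := by
    intro x hx i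
    exact (Finset.sum_eq_zero_iff_of_nonneg
      (fun j _ => mul_nonneg (hpsd j) (sq_nonneg _))).1 hx.2 i (mem_univ i)
  by_cases hvu : v = -u
  · right
    have h : -v = u := by rw [hvu, neg_neg]
    rw [h]
    exact JoinedIn.refl hu
  · left
    have hgpos : ∀ t : ℝ, t ∈ Set.Icc (0:ℝ) 1 →
        0 < ∑ i, ((1-t) * u i + t * v i)^2 := by
      intro t ht
      rcases lt_or_eq_of_le (Finset.sum_nonneg
        (fun i (_ : i ∈ univ) => sq_nonneg ((1-t) * u i + t * v i))) with h | h
      · exact h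
      exfalso
      have hz : ∀ i, (1-t) * u i + t * v i = 0 := by
        intro i
        have h2 := (Finset.sum_eq_zero_iff_of_nonneg
          (fun j (_ : j ∈ univ) => sq_nonneg ((1-t) * u j + t * v j))).1 h.symm i (mem_univ i)
        exact pow_eq_zero_iff (n := 2) (by norm_num) |>.1 h2
      have hsum : ∑ i, ((1-t) * u i)^2 = ∑ i, (t * v i)^2 := by
        apply Finset.sum_congr rfl
        intro i _
        have h3 : (1-t) * u i = -(t * v i) := by linarith [hz i]
        rw [h3, neg_sq]
      have h1 : (1-t)^2 = t^2 := by
        have e1 : ∑ i, ((1-t) * u i)^2 = (1-t)^2 * ∑ i, (u i)^2 := by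
          rw [Finset.mul_sum]; exact Finset.sum_congr rfl (fun i _ => by ring)
        have e2 : ∑ i, (t * v i)^2 = t^2 * ∑ i, (v i)^2 := by
          rw [Finset.mul_sum]; exact Finset.sum_congr rfl (fun i _ => by ring)
        rw [e1, e2, hu.1, hv.1] at hsum; linarith
      have ht2 : t = 1/2 := by nlinarith [ht.1, ht.2]
      apply hvu
      funext i
      have h4 := hz i
      rw [ht2] at h4
      have : v i = -u i := by linarith
      simp [this]
    have hgcont : Continuous (fun t : ℝ => fun i => (1-t) * u i + t * v i) := by
      apply continuous_pi; intro i; fun_prop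
    have hNcont : Continuous (fun t : ℝ => Real.sqrt (∑ i, ((1-t) * u i + t * v i)^2)) := by
      apply Real.continuous_sqrt.comp
      apply continuous_finset_sum
      intro i _
      fun_prop
    have hNpos : ∀ t : ℝ, t ∈ Set.Icc (0:ℝ) 1 →
        0 < Real.sqrt (∑ i, ((1-t) * u i + t * v i)^2) :=
      fun t ht => Real.sqrt_pos.2 (hgpos t ht)
    apply joinedIn_of_fun (p := fun t =>
      (Real.sqrt (∑ i, ((1-t) * u i + t * v i)^2))⁻¹ • (fun i => (1-t) * u i + t * v i))
    · exact ((hNcont.continuousOn.inv₀ (fun t ht => (hNpos t ht).ne')).smul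
        hgcont.continuousOn)
    · have h1 : (fun i => (1-(0:ℝ)) * u i + 0 * v i) = u := by funext i; ring
      have h2 : ∑ i, ((1-(0:ℝ)) * u i + 0 * v i)^2 = 1 := by
        rw [show ∑ i, ((1-(0:ℝ)) * u i + 0 * v i)^2 = ∑ i, (u i)^2 from
          Finset.sum_congr rfl (fun i _ => by ring)]
        exact hu.1
      rw [h1, h2, Real.sqrt_one]; simp
    · have h1 : (fun i => (1-(1:ℝ)) * u i + 1 * v i) = v := by funext i; ring
      have h2 : ∑ i, ((1-(1:ℝ)) * u i + 1 * v i)^2 = 1 := by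
        rw [show ∑ i, ((1-(1:ℝ)) * u i + 1 * v i)^2 = ∑ i, (v i)^2 from
          Finset.sum_congr rfl (fun i _ => by ring)]
        exact hv.1
      rw [h1, h2, Real.sqrt_one]; simp
    · intro t ht
      have hsq : (Real.sqrt (∑ i, ((1-t) * u i + t * v i)^2))^2
          = ∑ i, ((1-t) * u i + t * v i)^2 := Real.sq_sqrt (le_of_lt (hgpos t ht))
      have hNt := hNpos t ht
      constructor
      · show (∑ i, ((Real.sqrt (∑ i, ((1-t) * u i + t * v i)^2))⁻¹ *
          ((1-t) * u i + t * v i))^2) = 1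
        have : ∀ i, ((Real.sqrt (∑ i, ((1-t) * u i + t * v i)^2))⁻¹ *
            ((1-t) * u i + t * v i))^2 = (Real.sqrt (∑ i, ((1-t) * u i + t * v i)^2))⁻¹^2 *
            ((1-t) * u i + t * v i)^2 := fun i => by ring
        rw [Finset.sum_congr rfl (fun i _ => this i), ← Finset.mul_sum, inv_pow, hsq]
        exact inv_mul_cancel₀ (hgpos t ht).ne'
      · show (∑ i, lam i * ((Real.sqrt (∑ i, ((1-t) * u i + t * v i)^2))⁻¹ *
          ((1-t) * u i + t * v i))^2) = 0
        apply Finset.sum_eq_zero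
        intro i _
        rcases eq_or_lt_of_le (hpsd i) with h0 | h0
        · rw [← h0]; ring
        · have hui : u i = 0 := by
            have h5 := hterm hu i
            have h6 : (u i)^2 = 0 := by
              rcases mul_eq_zero.1 h5 with h | h
              · exact absurd h h0.ne'
              · exact h
            exact pow_eq_zero_iff (n := 2) (by norm_num) |>.1 h6
          have hvi : v i = 0 := by
            have h5 := hterm hv i
            have h6 : (v i)^2 = 0 := by
              rcases mul_eq_zero.1 h5 with h | h
              · exact absurd h h0.ne'
              · exact h
            exact pow_eq_zero_iff (n := 2) (by norm_num) |>.1 h6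
          rw [hui, hvi]
          ring

lemma sum_split2 {ip iq : Fin d} (h : ip ≠ iq) (f : Fin d → ℝ) :
    ∑ i, f i = f ip + f iq + ∑ i ∈ (univ.erase ip).erase iq, f i := by
  rw [← Finset.add_sum_erase _ f (mem_univ ip),
    ← Finset.add_sum_erase _ f (Finset.mem_erase.2 ⟨h.symm, mem_univ iq⟩)]
  ring

lemma mem_E2 {ip iq i : Fin d} (hi : i ∈ (univ.erase ip).erase iq) : i ≠ ip ∧ i ≠ iq := by
  rcases Finset.mem_erase.1 hi with ⟨h1, h2⟩
  rcases Finset.mem_erase.1 h2 with ⟨h3, _⟩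
  exact ⟨h3, h1⟩

noncomputable def wpt (lam : Fin d → ℝ) (ip iq : Fin d) (e1 e2 : ℝ) : Fin d → ℝ := fun i =>
  if i = ip then e1 * Real.sqrt (-lam iq / (lam ip - lam iq))
  else if i = iq then e2 * Real.sqrt (lam ip / (lam ip - lam iq)) else 0

lemma wpt_neg (lam : Fin d → ℝ) (ip iq : Fin d) (e1 e2 : ℝ) :
    -(wpt lam ip iq e1 e2) = wpt lam ip iq (-e1) (-e2) := by
  funext i
  simp only [wpt, Pi.neg_apply]
  split_ifs <;> ring

lemma wpt_mem {lam : Fin d → ℝ} {ip iq : Fin d} (h : ip ≠ iq) (hp : 0 < lam ip)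
    (hq : lam iq < 0) {e1 e2 : ℝ} (he1 : e1^2 = 1) (he2 : e2^2 = 1) :
    wpt lam ip iq e1 e2 ∈ sphQ lam := by
  have hΔ : 0 < lam ip - lam iq := by linarith
  have ha : (0:ℝ) ≤ -lam iq / (lam ip - lam iq) := div_nonneg (by linarith) hΔ.le
  have hb : (0:ℝ) ≤ lam ip / (lam ip - lam iq) := by positivity
  have hwp : wpt lam ip iq e1 e2 ip = e1 * Real.sqrt (-lam iq / (lam ip - lam iq)) := by
    simp [wpt]
  have hwq : wpt lam ip iq e1 e2 iq = e2 * Real.sqrt (lam ip / (lam ip - lam iq)) := by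
    simp [wpt, h.symm]
  have hwz : ∀ i, i ≠ ip → i ≠ iq → wpt lam ip iq e1 e2 i = 0 := by
    intro i h1 h2; simp [wpt, h1, h2]
  have hsp : (wpt lam ip iq e1 e2 ip)^2 = -lam iq / (lam ip - lam iq) := by
    rw [hwp, mul_pow, he1, one_mul, Real.sq_sqrt ha]
  have hsq2 : (wpt lam ip iq e1 e2 iq)^2 = lam ip / (lam ip - lam iq) := by
    rw [hwq, mul_pow, he2, one_mul, Real.sq_sqrt hb]
  constructor
  · rw [sum_split2 h, hsp, hsq2, Finset.sum_eq_zero (fun i hi => by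
      rcases mem_E2 hi with ⟨h1, h2⟩; rw [hwz i h1 h2]; ring)]
    field_simp
    ring
  · rw [sum_split2 h (fun i => lam i * (wpt lam ip iq e1 e2 i)^2), hsp, hsq2,
      Finset.sum_eq_zero (fun i hi => by
        rcases mem_E2 hi with ⟨h1, h2⟩; rw [hwz i h1 h2]; ring)]
    field_simp
    ring

lemma stage1 {lam : Fin d → ℝ} {ip iq : Fin d} (h : ip ≠ iq) (hp : 0 < lam ip)
    (hq : lam iq < 0) {x : Fin d → ℝ} (hx : x ∈ sphQ lam) :
    JoinedIn (sphQ lam) x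
      (wpt lam ip iq (if 0 ≤ x ip then 1 else -1) (if 0 ≤ x iq then 1 else -1)) := by
  classical
  have hΔ : 0 < lam ip - lam iq := by linarith
  set lp := lam ip
  set lq := lam iq
  set E2 := (univ.erase ip).erase iq with hE2
  set ms := ∑ i ∈ E2, (x i)^2 with hms
  set mq := ∑ i ∈ E2, lam i * (x i)^2 with hmq
  have hx1 : x ip^2 + x iq^2 + ms = 1 := by
    rw [← hx.1, sum_split2 h (fun i => (x i)^2)]
  have hx2 : lp * x ip^2 + lq * x iq^2 + mq = 0 := by
    rw [← hx.2, sum_split2 h (fun i => lam i * (x i)^2)]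
  set sg1 : ℝ := if 0 ≤ x ip then 1 else -1 with hsg1def
  set sg2 : ℝ := if 0 ≤ x iq then 1 else -1 with hsg2def
  have hsg1 : sg1^2 = 1 := by rw [hsg1def]; split_ifs <;> norm_num
  have hsg2 : sg2^2 = 1 := by rw [hsg2def]; split_ifs <;> norm_num
  have habs1 : sg1 * |x ip| = x ip := by
    rw [hsg1def]; split_ifs with hh
    · rw [one_mul, abs_of_nonneg hh]
    · rw [abs_of_neg (not_le.1 hh)]; ring
  have habs2 : sg2 * |x iq| = x iq := by
    rw [hsg2def]; split_ifs with hh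
    · rw [one_mul, abs_of_nonneg hh]
    · rw [abs_of_neg (not_le.1 hh)]; ring
  set Af : ℝ → ℝ := fun t =>
    ((1 - (1-t)^2) * (-lq) + (1-t)^2 * ((lp - lq) * x ip^2)) / (lp - lq) with hAf
  set Bf : ℝ → ℝ := fun t =>
    ((1 - (1-t)^2) * lp + (1-t)^2 * ((lp - lq) * x iq^2)) / (lp - lq) with hBf
  have hsrange : ∀ t : ℝ, t ∈ Set.Icc (0:ℝ) 1 → 0 ≤ (1-t)^2 ∧ (1-t)^2 ≤ 1 := by
    intro t ht
    constructor
    · positivity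
    · nlinarith [ht.1, ht.2]
  have hAfnn : ∀ t : ℝ, t ∈ Set.Icc (0:ℝ) 1 → 0 ≤ Af t := by
    intro t ht
    rcases hsrange t ht with ⟨h1, h2⟩
    apply div_nonneg _ hΔ.le
    have : 0 ≤ (lp - lq) * x ip^2 := by positivity
    nlinarith
  have hBfnn : ∀ t : ℝ, t ∈ Set.Icc (0:ℝ) 1 → 0 ≤ Bf t := by
    intro t ht
    rcases hsrange t ht with ⟨h1, h2⟩
    apply div_nonneg _ hΔ.le
    have : 0 ≤ (lp - lq) * x iq^2 := by positivity
    nlinarith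
  set pf : ℝ → Fin d → ℝ := fun t i =>
    if i = ip then sg1 * Real.sqrt (Af t)
    else if i = iq then sg2 * Real.sqrt (Bf t) else (1-t) * x i with hpf
  have hvp : ∀ t : ℝ, pf t ip = sg1 * Real.sqrt (Af t) := by intro t; simp [hpf]
  have hvq : ∀ t : ℝ, pf t iq = sg2 * Real.sqrt (Bf t) := by
    intro t; simp [hpf, Ne.symm h]
  have hvz : ∀ (t : ℝ) (i : Fin d), i ≠ ip → i ≠ iq → pf t i = (1-t) * x i := by
    intro t i h1 h2; simp [hpf, h1, h2]
  apply joinedIn_of_fun (p := pf)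
  · apply Continuous.continuousOn
    apply continuous_pi
    intro i
    by_cases h1 : i = ip
    · have : (fun t => pf t i) = fun t => sg1 * Real.sqrt (Af t) := by
        funext t; rw [h1, hvp]
      rw [this]
      apply Continuous.mul continuous_const
      apply Real.continuous_sqrt.comp
      rw [hAf]; fun_prop
    · by_cases h2 : i = iq
      · have : (fun t => pf t i) = fun t => sg2 * Real.sqrt (Bf t) := by
          funext t; rw [h2, hvq]
        rw [this]
        apply Continuous.mul continuous_const
        apply Real.continuous_sqrt.comp
        rw [hBf]; fun_prop
      · have : (fun t => pf t i) = fun t => (1-t) * x i := by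
          funext t; rw [hvz t i h1 h2]
        rw [this]; fun_prop
  · have hAf0 : Af 0 = x ip^2 := by rw [hAf]; field_simp; ring
    have hBf0 : Bf 0 = x iq^2 := by rw [hBf]; field_simp; ring
    funext i
    by_cases h1 : i = ip
    · rw [h1, hvp, hAf0, Real.sqrt_sq_eq_abs]; exact habs1
    · by_cases h2 : i = iq
      · rw [h2, hvq, hBf0, Real.sqrt_sq_eq_abs]; exact habs2
      · rw [hvz 0 i h1 h2]; ring
  · have hAf1 : Af 1 = -lq / (lp - lq) := by rw [hAf]; norm_num
    have hBf1 : Bf 1 = lp / (lp - lq) := by rw [hBf]; norm_num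
    funext i
    by_cases h1 : i = ip
    · rw [h1, hvp, hAf1]
      simp [wpt]
      exact Or.inl rfl
    · by_cases h2 : i = iq
      · rw [h2, hvq, hBf1]
        simp [wpt, Ne.symm h]
        exact Or.inl rfl
      · rw [hvz 1 i h1 h2]
        simp [wpt, h1, h2]
  · intro t ht
    have hsq1 : (sg1 * Real.sqrt (Af t))^2 = Af t := by
      rw [mul_pow, hsg1, one_mul, Real.sq_sqrt (hAfnn t ht)]
    have hsq2' : (sg2 * Real.sqrt (Bf t))^2 = Bf t := by
      rw [mul_pow, hsg2, one_mul, Real.sq_sqrt (hBfnn t ht)]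
    have htail1 : ∑ i ∈ E2, (pf t i)^2 = (1-t)^2 * ms := by
      rw [hms, Finset.mul_sum]
      apply Finset.sum_congr rfl
      intro i hi
      rcases mem_E2 hi with ⟨hh1, hh2⟩
      rw [hvz t i hh1 hh2]; ring
    have htail2 : ∑ i ∈ E2, lam i * (pf t i)^2 = (1-t)^2 * mq := by
      rw [hmq, Finset.mul_sum]
      apply Finset.sum_congr rfl
      intro i hi
      rcases mem_E2 hi with ⟨hh1, hh2⟩
      rw [hvz t i hh1 hh2]; ring
    constructor
    · show ∑ i, (pf t i)^2 = 1
      rw [sum_split2 h (fun i => (pf t i)^2)]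
      simp only [hvp, hvq]
      rw [hsq1, hsq2', htail1, hAf, hBf]
      field_simp
      linear_combination ((lp - lq) * (1-t)^2) * hx1
    · show ∑ i, lam i * (pf t i)^2 = 0
      rw [sum_split2 h (fun i => lam i * (pf t i)^2)]
      simp only [hvp, hvq]
      rw [hsq1, hsq2', htail2, hAf, hBf]
      field_simp
      linear_combination ((lp - lq) * (1-t)^2) * hx2

lemma sum_split3 {ip im iq : Fin d} (h1 : ip ≠ im) (h2 : ip ≠ iq) (h3 : im ≠ iq)
    (f : Fin d → ℝ) :
    ∑ i, f i = f ip + f im + f iq + ∑ i ∈ ((univ.erase ip).erase im).erase iq, f i := by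
  rw [← Finset.add_sum_erase _ f (mem_univ ip),
    ← Finset.add_sum_erase _ f (Finset.mem_erase.2 ⟨h1.symm, mem_univ im⟩),
    ← Finset.add_sum_erase _ f (Finset.mem_erase.2 ⟨h3.symm,
      Finset.mem_erase.2 ⟨h2.symm, mem_univ iq⟩⟩)]
  ring

lemma mem_E3 {ip im iq i : Fin d} (hi : i ∈ ((univ.erase ip).erase im).erase iq) :
    i ≠ ip ∧ i ≠ im ∧ i ≠ iq := by
  rcases Finset.mem_erase.1 hi with ⟨ha, hb⟩
  rcases Finset.mem_erase.1 hb with ⟨hc, hd⟩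
  rcases Finset.mem_erase.1 hd with ⟨he, _⟩
  exact ⟨he, hc, ha⟩

lemma stage2a {lam : Fin d → ℝ} {ip im iq : Fin d} (hpm : ip ≠ im) (hpq : ip ≠ iq)
    (hmq : im ≠ iq) (hp : 0 < lam ip) (hq : lam iq < 0) (hm : 0 ≤ lam im) :
    JoinedIn (sphQ lam) (wpt lam ip iq 1 (-1)) (wpt lam ip iq (-1) (-1)) := by
  classical
  have hΔ : 0 < lam ip - lam iq := by linarith
  have hΔm : 0 < lam im - lam iq := by linarith
  set al2 : ℝ := -lam iq / (lam ip - lam iq) with hal2def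
  set am2 : ℝ := -lam iq / (lam im - lam iq) with ham2def
  have hal2 : 0 ≤ al2 ∧ al2 ≤ 1 := by
    constructor
    · exact div_nonneg (by linarith) hΔ.le
    · rw [hal2def, div_le_one hΔ]; linarith
  have ham2 : 0 ≤ am2 ∧ am2 ≤ 1 := by
    constructor
    · exact div_nonneg (by linarith) hΔm.le
    · rw [ham2def, div_le_one hΔm]; linarith
  set R : ℝ → ℝ := fun t =>
    1 - al2 * (Real.cos (Real.pi * t))^2 - am2 * (Real.sin (Real.pi * t))^2 with hRdef
  have heR : ∀ t : ℝ, R t =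
      1 - al2 * (Real.cos (Real.pi * t))^2 - am2 * (Real.sin (Real.pi * t))^2 := by
    intro t; simp only [hRdef]
  have hR : ∀ t : ℝ, 0 ≤ R t := by
    intro t
    rw [heR t]
    have h1 := Real.sin_sq_add_cos_sq (Real.pi * t)
    nlinarith [sq_nonneg (Real.cos (Real.pi * t)), sq_nonneg (Real.sin (Real.pi * t)),
      hal2.1, hal2.2, ham2.1, ham2.2]
  set pf : ℝ → Fin d → ℝ := fun t i =>
    if i = ip then Real.sqrt al2 * Real.cos (Real.pi * t)
    else if i = im then Real.sqrt am2 * Real.sin (Real.pi * t)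
    else if i = iq then -Real.sqrt (R t) else 0 with hpf
  have hvp : ∀ t : ℝ, pf t ip = Real.sqrt al2 * Real.cos (Real.pi * t) := by
    intro t; simp [hpf]
  have hvm : ∀ t : ℝ, pf t im = Real.sqrt am2 * Real.sin (Real.pi * t) := by
    intro t; simp [hpf, Ne.symm hpm]
  have hvq : ∀ t : ℝ, pf t iq = -Real.sqrt (R t) := by
    intro t; simp [hpf, Ne.symm hpq, Ne.symm hmq]
  have hvz : ∀ (t : ℝ) (i : Fin d), i ≠ ip → i ≠ im → i ≠ iq → pf t i = 0 := by
    intro t i h1 h2 h3; simp [hpf, h1, h2, h3]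
  have hRsq : ∀ t : ℝ, (pf t iq)^2 = R t := by
    intro t; rw [hvq, neg_sq, Real.sq_sqrt (hR t)]
  have hpsq : ∀ t : ℝ, (pf t ip)^2 = al2 * (Real.cos (Real.pi * t))^2 := by
    intro t; rw [hvp, mul_pow, Real.sq_sqrt hal2.1]
  have hmsq : ∀ t : ℝ, (pf t im)^2 = am2 * (Real.sin (Real.pi * t))^2 := by
    intro t; rw [hvm, mul_pow, Real.sq_sqrt ham2.1]
  apply joinedIn_of_fun (p := pf)
  · apply Continuous.continuousOn
    apply continuous_pi
    intro i
    by_cases h1 : i = ip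
    · have : (fun t => pf t i) = fun t => Real.sqrt al2 * Real.cos (Real.pi * t) := by
        funext t; rw [h1, hvp]
      rw [this]; fun_prop
    · by_cases h2 : i = im
      · have : (fun t => pf t i) = fun t => Real.sqrt am2 * Real.sin (Real.pi * t) := by
          funext t; rw [h2, hvm]
        rw [this]; fun_prop
      · by_cases h3 : i = iq
        · have : (fun t => pf t i) = fun t => -Real.sqrt (R t) := by
            funext t; rw [h3, hvq]
          rw [this]
          apply Continuous.neg
          apply Real.continuous_sqrt.comp
          simp only [hRdef]
          fun_prop
        · have : (fun t => pf t i) = fun t => 0 := by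
            funext t; rw [hvz t i h1 h2 h3]
          rw [this]; fun_prop
  · funext i
    have hR0 : R 0 = lam ip / (lam ip - lam iq) := by
      rw [heR 0, hal2def]
      simp
      field_simp <;> ring
    by_cases h1 : i = ip
    · rw [h1, hvp]; simp [wpt, hal2def]
    · by_cases h2 : i = im
      · rw [h2, hvm]; simp [wpt, Ne.symm hpm, hmq]
      · by_cases h3 : i = iq
        · rw [h3, hvq, hR0]; simp [wpt, Ne.symm hpq]
        · rw [hvz 0 i h1 h2 h3]; simp [wpt, h1, h3]
  · funext i
    have hR1 : R 1 = lam ip / (lam ip - lam iq) := by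
      rw [heR 1, hal2def]
      simp
      field_simp <;> ring
    by_cases h1 : i = ip
    · rw [h1, hvp]; simp [wpt, hal2def]
    · by_cases h2 : i = im
      · rw [h2, hvm]; simp [wpt, Ne.symm hpm, hmq]
      · by_cases h3 : i = iq
        · rw [h3, hvq, hR1]; simp [wpt, Ne.symm hpq]
        · rw [hvz 1 i h1 h2 h3]; simp [wpt, h1, h3]
  · intro t ht
    have hsc := Real.sin_sq_add_cos_sq (Real.pi * t)
    constructor
    · show ∑ i, (pf t i)^2 = 1
      rw [sum_split3 hpm hpq hmq (fun i => (pf t i)^2)]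
      simp only [hpsq, hmsq, hRsq]
      rw [Finset.sum_eq_zero (fun i hi => by
        rcases mem_E3 hi with ⟨ha, hb, hc⟩
        rw [hvz t i ha hb hc]; ring)]
      rw [heR t]; ring
    · show ∑ i, lam i * (pf t i)^2 = 0
      rw [sum_split3 hpm hpq hmq (fun i => lam i * (pf t i)^2)]
      simp only [hpsq, hmsq, hRsq]
      rw [Finset.sum_eq_zero (fun i hi => by
        rcases mem_E3 hi with ⟨ha, hb, hc⟩
        rw [hvz t i ha hb hc]; ring)]
      have e1 : al2 * (lam ip - lam iq) = -lam iq := by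
        rw [hal2def]; field_simp
      have e2 : am2 * (lam im - lam iq) = -lam iq := by
        rw [ham2def]; field_simp
      linear_combination lam iq * heR t + (Real.cos (Real.pi * t))^2 * e1 +
        (Real.sin (Real.pi * t))^2 * e2 - lam iq * hsc

lemma stage2b {lam : Fin d → ℝ} {ip im iq : Fin d} (hpm : ip ≠ im) (hpq : ip ≠ iq)
    (hmq : im ≠ iq) (hp : 0 < lam ip) (hq : lam iq < 0) (hm : lam im ≤ 0) :
    JoinedIn (sphQ lam) (wpt lam ip iq 1 (-1)) (wpt lam ip iq 1 1) := by
  classical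
  have hΔ : 0 < lam ip - lam iq := by linarith
  have hΔm : 0 < lam ip - lam im := by linarith
  set b2 : ℝ := lam ip / (lam ip - lam iq) with hb2def
  set bm2 : ℝ := lam ip / (lam ip - lam im) with hbm2def
  have hb2 : 0 ≤ b2 ∧ b2 ≤ 1 := by
    constructor
    · exact div_nonneg hp.le hΔ.le
    · rw [hb2def, div_le_one hΔ]; linarith
  have hbm2 : 0 ≤ bm2 ∧ bm2 ≤ 1 := by
    constructor
    · exact div_nonneg hp.le hΔm.le
    · rw [hbm2def, div_le_one hΔm]; linarith
  set R : ℝ → ℝ := fun t =>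
    1 - bm2 * (Real.sin (Real.pi * t))^2 - b2 * (Real.cos (Real.pi * t))^2 with hRdef
  have heR : ∀ t : ℝ, R t =
      1 - bm2 * (Real.sin (Real.pi * t))^2 - b2 * (Real.cos (Real.pi * t))^2 := by
    intro t; simp only [hRdef]
  have hR : ∀ t : ℝ, 0 ≤ R t := by
    intro t
    rw [heR t]
    have h1 := Real.sin_sq_add_cos_sq (Real.pi * t)
    nlinarith [sq_nonneg (Real.cos (Real.pi * t)), sq_nonneg (Real.sin (Real.pi * t)),
      hb2.1, hb2.2, hbm2.1, hbm2.2]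
  set pf : ℝ → Fin d → ℝ := fun t i =>
    if i = ip then Real.sqrt (R t)
    else if i = im then Real.sqrt bm2 * Real.sin (Real.pi * t)
    else if i = iq then -(Real.sqrt b2 * Real.cos (Real.pi * t)) else 0 with hpf
  have hvp : ∀ t : ℝ, pf t ip = Real.sqrt (R t) := by
    intro t; simp [hpf]
  have hvm : ∀ t : ℝ, pf t im = Real.sqrt bm2 * Real.sin (Real.pi * t) := by
    intro t; simp [hpf, Ne.symm hpm]
  have hvq : ∀ t : ℝ, pf t iq = -(Real.sqrt b2 * Real.cos (Real.pi * t)) := by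
    intro t; simp [hpf, Ne.symm hpq, Ne.symm hmq]
  have hvz : ∀ (t : ℝ) (i : Fin d), i ≠ ip → i ≠ im → i ≠ iq → pf t i = 0 := by
    intro t i h1 h2 h3; simp [hpf, h1, h2, h3]
  have hpsq : ∀ t : ℝ, (pf t ip)^2 = R t := by
    intro t; rw [hvp, Real.sq_sqrt (hR t)]
  have hmsq : ∀ t : ℝ, (pf t im)^2 = bm2 * (Real.sin (Real.pi * t))^2 := by
    intro t; rw [hvm, mul_pow, Real.sq_sqrt hbm2.1]
  have hqsq : ∀ t : ℝ, (pf t iq)^2 = b2 * (Real.cos (Real.pi * t))^2 := by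
    intro t; rw [hvq, neg_sq, mul_pow, Real.sq_sqrt hb2.1]
  apply joinedIn_of_fun (p := pf)
  · apply Continuous.continuousOn
    apply continuous_pi
    intro i
    by_cases h1 : i = ip
    · have : (fun t => pf t i) = fun t => Real.sqrt (R t) := by
        funext t; rw [h1, hvp]
      rw [this]
      apply Real.continuous_sqrt.comp
      simp only [hRdef]
      fun_prop
    · by_cases h2 : i = im
      · have : (fun t => pf t i) = fun t => Real.sqrt bm2 * Real.sin (Real.pi * t) := by
          funext t; rw [h2, hvm]
        rw [this]; fun_prop
      · by_cases h3 : i = iq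
        · have : (fun t => pf t i) = fun t => -(Real.sqrt b2 * Real.cos (Real.pi * t)) := by
            funext t; rw [h3, hvq]
          rw [this]; fun_prop
        · have : (fun t => pf t i) = fun t => 0 := by
            funext t; rw [hvz t i h1 h2 h3]
          rw [this]; fun_prop
  · funext i
    have hR0 : R 0 = -lam iq / (lam ip - lam iq) := by
      rw [heR 0, hb2def]
      simp
      field_simp <;> ring
    by_cases h1 : i = ip
    · rw [h1, hvp, hR0]; simp [wpt]
    · by_cases h2 : i = im
      · rw [h2, hvm]; simp [wpt, Ne.symm hpm, hmq]
      · by_cases h3 : i = iq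
        · rw [h3, hvq]; simp [wpt, Ne.symm hpq, hb2def]
        · rw [hvz 0 i h1 h2 h3]; simp [wpt, h1, h3]
  · funext i
    have hR1 : R 1 = -lam iq / (lam ip - lam iq) := by
      rw [heR 1, hb2def]
      simp
      field_simp <;> ring
    by_cases h1 : i = ip
    · rw [h1, hvp, hR1]; simp [wpt]
    · by_cases h2 : i = im
      · rw [h2, hvm]; simp [wpt, Ne.symm hpm, hmq]
      · by_cases h3 : i = iq
        · rw [h3, hvq]; simp [wpt, Ne.symm hpq, hb2def]
        · rw [hvz 1 i h1 h2 h3]; simp [wpt, h1, h3]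
  · intro t ht
    have hsc := Real.sin_sq_add_cos_sq (Real.pi * t)
    constructor
    · show ∑ i, (pf t i)^2 = 1
      rw [sum_split3 hpm hpq hmq (fun i => (pf t i)^2)]
      simp only [hpsq, hmsq, hqsq]
      rw [Finset.sum_eq_zero (fun i hi => by
        rcases mem_E3 hi with ⟨ha, hb, hc⟩
        rw [hvz t i ha hb hc]; ring)]
      rw [heR t]; ring
    · show ∑ i, lam i * (pf t i)^2 = 0
      rw [sum_split3 hpm hpq hmq (fun i => lam i * (pf t i)^2)]
      simp only [hpsq, hmsq, hqsq]
      rw [Finset.sum_eq_zero (fun i hi => by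
        rcases mem_E3 hi with ⟨ha, hb, hc⟩
        rw [hvz t i ha hb hc]; ring)]
      have e1 : b2 * (lam ip - lam iq) = lam ip := by
        rw [hb2def]; field_simp
      have e2 : bm2 * (lam ip - lam im) = lam ip := by
        rw [hbm2def]; field_simp
      linear_combination lam ip * heR t - (Real.sin (Real.pi * t))^2 * e2 -
        (Real.cos (Real.pi * t))^2 * e1 - lam ip * hsc

set_option maxHeartbeats 1000000 in
lemma conn_diag (hd : 3 ≤ d) (lam : Fin d → ℝ) {u v : Fin d → ℝ}
    (hu : u ∈ sphQ lam) (hv : v ∈ sphQ lam) :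
    JoinedIn (sphQ lam) u v ∨ JoinedIn (sphQ lam) u (-v) := by
  classical
  by_cases hpsd : ∀ i, 0 ≤ lam i
  · exact conn_psd lam hpsd hu hv
  by_cases hnsd : ∀ i, lam i ≤ 0
  · have hset : sphQ (fun i => -lam i) = sphQ lam := by
      ext x
      unfold sphQ
      simp only [Set.mem_setOf_eq, and_congr_right_iff]
      intro _
      constructor
      · intro h
        have : -∑ i, lam i * (x i)^2 = 0 := by
          rw [← h, ← Finset.sum_neg_distrib]
          exact Finset.sum_congr rfl (fun i _ => by ring)
        linarith
      · intro h
        rw [show ∑ i, -lam i * (x i)^2 = -∑ i, lam i * (x i)^2 from by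
          rw [← Finset.sum_neg_distrib]; exact Finset.sum_congr rfl (fun i _ => by ring), h]
        ring
    have hu' : u ∈ sphQ (fun i => -lam i) := by rw [hset]; exact hu
    have hv' : v ∈ sphQ (fun i => -lam i) := by rw [hset]; exact hv
    have := conn_psd (fun i => -lam i) (fun i => by simpa using hnsd i) hu' hv'
    rw [hset] at this
    exact this
  push_neg at hpsd hnsd
  obtain ⟨iq, hq⟩ := hpsd
  obtain ⟨ip, hp⟩ := hnsd

  have hpq : ip ≠ iq := by rintro rfl; linarith
  have hcard : ((univ.erase ip).erase iq).Nonempty := by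
    apply Finset.card_pos.1
    rw [Finset.card_erase_of_mem (Finset.mem_erase.2 ⟨hpq.symm, mem_univ iq⟩),
      Finset.card_erase_of_mem (mem_univ ip), Finset.card_univ, Fintype.card_fin]
    omega
  obtain ⟨im, him⟩ := hcard
  obtain ⟨hmp, hmq⟩ := mem_E2 him
  have hpm : ip ≠ im := hmp.symm
  have hmq' : im ≠ iq := hmq
  have hMsym : ∀ x ∈ sphQ lam, -x ∈ sphQ lam := fun x hx => sphQ_neg_mem lam hx
  have hone : (1:ℝ)^2 = 1 := by norm_num
  have hmone : ((-1):ℝ)^2 = 1 := by norm_num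
  have hcmem := wpt_mem hpq hp hq hone hone
  have hw11 : -(wpt lam ip iq 1 1) = wpt lam ip iq (-1) (-1) := by
    rw [wpt_neg]
  have hw1m : -(wpt lam ip iq 1 (-1)) = wpt lam ip iq (-1) 1 := by
    rw [wpt_neg]; norm_num
  have key : ∀ x ∈ sphQ lam, JoinedIn (sphQ lam) x (wpt lam ip iq 1 1) ∨
      JoinedIn (sphQ lam) x (-(wpt lam ip iq 1 1)) := by
    intro x hx
    have h1 := stage1 hpq hp hq hx
    by_cases c1 : 0 ≤ x ip <;> by_cases c2 : 0 ≤ x iq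
    · rw [if_pos c1, if_pos c2] at h1
      exact Or.inl h1
    · rw [if_pos c1, if_neg c2] at h1
      rcases le_or_gt 0 (lam im) with hm | hm
      · right
        rw [hw11]
        exact h1.trans (stage2a hpm hpq hmq' hp hq hm)
      · left
        exact h1.trans (stage2b hpm hpq hmq' hp hq hm.le)
    · rw [if_neg c1, if_pos c2] at h1
      rw [← hw1m] at h1
      rcases le_or_gt 0 (lam im) with hm | hm
      · left
        have h2 := joined_neg hMsym (stage2a hpm hpq hmq' hp hq hm)
        rw [← hw11, neg_neg] at h2
        exact h1.trans h2
      · right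
        exact h1.trans (joined_neg hMsym (stage2b hpm hpq hmq' hp hq hm.le))
    · rw [if_neg c1, if_neg c2] at h1
      rw [← hw11] at h1
      right
      exact h1
  rcases key u hu with h1 | h1 <;> rcases key v hv with h2 | h2
  · exact Or.inl (h1.trans h2.symm)
  · right
    have h3 := joined_neg hMsym h2
    rw [neg_neg] at h3
    exact h1.trans h3.symm
  · right
    have h3 := joined_neg hMsym h2
    exact h1.trans h3.symm
  · exact Or.inl (h1.trans h2.symm)

/-- Connectivity (mod antipodes) of the intersection of the unit sphere with the zero
set of a general symmetric quadratic form, `d ≥ 3`. -/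
lemma conn_sym (hd : 3 ≤ d) {Q : Matrix (Fin d) (Fin d) ℝ} (hQ : Q.IsSymm)
    {u v : Fin d → ℝ} (hu1 : u ⬝ᵥ u = 1) (hu2 : u ⬝ᵥ Q *ᵥ u = 0)
    (hv1 : v ⬝ᵥ v = 1) (hv2 : v ⬝ᵥ Q *ᵥ v = 0) :
    JoinedIn {x | x ⬝ᵥ x = 1 ∧ x ⬝ᵥ Q *ᵥ x = 0} u v ∨
      JoinedIn {x | x ⬝ᵥ x = 1 ∧ x ⬝ᵥ Q *ᵥ x = 0} u (-v) := by
  classical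
  have hH : Q.IsHermitian := by
    rw [Matrix.IsHermitian, conjTranspose_eq_transpose_of_trivial]; exact hQ
  set U : Matrix (Fin d) (Fin d) ℝ := (hH.eigenvectorUnitary : Matrix (Fin d) (Fin d) ℝ)
    with hUdef
  set lam : Fin d → ℝ := hH.eigenvalues with hlamdef
  have hspec : Q = U * diagonal lam * star U := by
    have h := hH.spectral_theorem
    simpa using h
  have hU1 : star U * U = 1 := Unitary.star_mul_self_of_mem (SetLike.coe_mem _)
  have hU2 : U * star U = 1 := Unitary.mul_star_self_of_mem (SetLike.coe_mem _)
  have hstarU : star U = Uᵀ := by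
    rw [Matrix.star_eq_conjTranspose, conjTranspose_eq_transpose_of_trivial]
  -- transport map
  set T : (Fin d → ℝ) → (Fin d → ℝ) := fun y => U *ᵥ y with hTdef
  have hTcont : Continuous T := by
    apply continuous_pi
    intro i
    simp only [hTdef, Matrix.mulVec, dotProduct]
    exact continuous_finset_sum _ (fun j _ => continuous_const.mul (continuous_apply j))
  have hTdot : ∀ y y' : Fin d → ℝ, T y ⬝ᵥ T y' = y ⬝ᵥ y' := by
    intro y y'
    rw [hTdef]
    show (U *ᵥ y) ⬝ᵥ (U *ᵥ y') = y ⬝ᵥ y'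
    rw [Matrix.dotProduct_mulVec, ← Matrix.mulVec_transpose, Matrix.mulVec_mulVec,
      ← hstarU, hU1, Matrix.one_mulVec]
  have hTQ : ∀ y : Fin d → ℝ, T y ⬝ᵥ Q *ᵥ T y = ∑ i, lam i * (y i)^2 := by
    intro y
    have hQU : Q * U = U * diagonal lam := by
      rw [hspec, Matrix.mul_assoc (U * diagonal lam) (star U) U, hU1, Matrix.mul_one]
    have h1 : Q *ᵥ T y = T (diagonal lam *ᵥ y) := by
      rw [hTdef]
      show Q *ᵥ (U *ᵥ y) = U *ᵥ (diagonal lam *ᵥ y)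
      rw [Matrix.mulVec_mulVec, hQU, ← Matrix.mulVec_mulVec]
    rw [h1, hTdot]
    simp only [dotProduct]
    apply Finset.sum_congr rfl
    intro i _
    rw [Matrix.mulVec_diagonal]
    ring
  have hdotsq : ∀ y : Fin d → ℝ, y ⬝ᵥ y = ∑ i, (y i)^2 := by
    intro y
    simp [dotProduct, sq]
  have hmemT : ∀ y : Fin d → ℝ, y ∈ sphQ lam →
      T y ∈ {x : Fin d → ℝ | x ⬝ᵥ x = 1 ∧ x ⬝ᵥ Q *ᵥ x = 0} := by
    intro y hy
    constructor
    · rw [hTdot, hdotsq]; exact hy.1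
    · rw [hTQ]; exact hy.2
  set cu : Fin d → ℝ := star U *ᵥ u with hcudef
  set cv : Fin d → ℝ := star U *ᵥ v with hcvdef
  have hTcu : T cu = u := by
    rw [hTdef, hcudef]
    show U *ᵥ (star U *ᵥ u) = u
    rw [Matrix.mulVec_mulVec, hU2, Matrix.one_mulVec]
  have hTcv : T cv = v := by
    rw [hTdef, hcvdef]
    show U *ᵥ (star U *ᵥ v) = v
    rw [Matrix.mulVec_mulVec, hU2, Matrix.one_mulVec]
  have hcu : cu ∈ sphQ lam := by
    constructor
    · have h := hTdot cu cu
      rw [hTcu, hu1, hdotsq] at h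
      exact h.symm
    · have h := hTQ cu
      rw [hTcu, hu2] at h
      exact h.symm
  have hcv : cv ∈ sphQ lam := by
    constructor
    · have h := hTdot cv cv
      rw [hTcv, hv1, hdotsq] at h
      exact h.symm
    · have h := hTQ cv
      rw [hTcv, hv2] at h
      exact h.symm
  have hmap : ∀ a b : Fin d → ℝ, JoinedIn (sphQ lam) a b →
      JoinedIn {x : Fin d → ℝ | x ⬝ᵥ x = 1 ∧ x ⬝ᵥ Q *ᵥ x = 0} (T a) (T b) := by
    intro a b hab
    obtain ⟨γ, hγ⟩ := hab
    exact ⟨γ.map hTcont, fun t => hmemT _ (hγ t)⟩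
  rcases conn_diag hd lam hcu hcv with h | h
  · left
    have h2 := hmap _ _ h
    rw [hTcu, hTcv] at h2
    exact h2
  · right
    have h2 := hmap _ _ h
    have hTneg : T (-cv) = -v := by
      show U *ᵥ (-cv) = -v
      rw [Matrix.mulVec_neg]
      exact congrArg Neg.neg hTcv
    rw [hTcu, hTneg] at h2
    exact h2



variable {n : ℕ} {ι : Type*}

lemma dot_sum_right (x : Fin n → ℝ) (s : Finset ι) (w : ι → Fin n → ℝ) :
    x ⬝ᵥ (∑ j ∈ s, w j) = ∑ j ∈ s, x ⬝ᵥ w j := by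
  simp only [dotProduct, Finset.sum_apply, Finset.mul_sum]
  exact Finset.sum_comm

lemma sum_dot_left (x : Fin n → ℝ) (s : Finset ι) (w : ι → Fin n → ℝ) :
    (∑ j ∈ s, w j) ⬝ᵥ x = ∑ j ∈ s, w j ⬝ᵥ x := by
  simp only [dotProduct, Finset.sum_apply, Finset.sum_mul]
  exact Finset.sum_comm

lemma sum_mulVec {p q : ℕ} (s : Finset ι) (M : ι → Matrix (Fin p) (Fin q) ℝ) (v : Fin q → ℝ) :
    (∑ j ∈ s, M j) *ᵥ v = ∑ j ∈ s, (M j) *ᵥ v := by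
  funext k
  simp only [Matrix.mulVec, dotProduct, Finset.sum_apply]
  have h : ∀ j, (∑ i ∈ s, M i) k j = ∑ i ∈ s, M i k j := by
    intro j; simp [Matrix.sum_apply]
  simp only [h, Finset.sum_mul]
  exact Finset.sum_comm

lemma expand_qf {D : ℕ} (M : Matrix (Fin n) (Fin n) ℝ) (e : Fin D → (Fin n → ℝ))
    (c c' : Fin D → ℝ) :
    (∑ i, c i • e i) ⬝ᵥ M *ᵥ (∑ j, c' j • e j)
      = ∑ i, ∑ j, c i * c' j * (e i ⬝ᵥ M *ᵥ e j) := by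
  have h1 : M *ᵥ (∑ j, c' j • e j) = ∑ j, c' j • (M *ᵥ e j) := by
    rw [show M *ᵥ (∑ j, c' j • e j) = Matrix.mulVecLin M (∑ j, c' j • e j) from rfl,
      map_sum]
    apply Finset.sum_congr rfl
    intro j _
    rw [_root_.map_smul]
    rfl
  rw [h1, sum_dot_left]
  apply Finset.sum_congr rfl
  intro i _
  rw [dot_sum_right]
  apply Finset.sum_congr rfl
  intro j _
  rw [smul_dotProduct, dotProduct_smul, smul_eq_mul, smul_eq_mul]
  ring

lemma qf_smul (M : Matrix (Fin n) (Fin n) ℝ) (c : ℝ) (x : Fin n → ℝ) :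
    (c • x) ⬝ᵥ M *ᵥ (c • x) = c^2 * (x ⬝ᵥ M *ᵥ x) := by
  rw [Matrix.mulVec_smul, smul_dotProduct, dotProduct_smul, smul_eq_mul, smul_eq_mul]
  ring

lemma bf_symm {M : Matrix (Fin n) (Fin n) ℝ} (hM : M.IsSymm) (x y : Fin n → ℝ) :
    x ⬝ᵥ M *ᵥ y = y ⬝ᵥ M *ᵥ x := by
  rw [Matrix.dotProduct_mulVec, ← Matrix.mulVec_transpose, hM, dotProduct_comm]

lemma fin3_cover : ∀ j0 : Fin 3, ∃ j1 j2 : Fin 3, j1 ≠ j0 ∧ j2 ≠ j0 ∧ j1 ≠ j2 ∧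
    ∀ j, j = j0 ∨ j = j1 ∨ j = j2 := by decide

lemma sum_fin3 {j0 j1 j2 : Fin 3} (h1 : j1 ≠ j0) (h2 : j2 ≠ j0) (h3 : j1 ≠ j2)
    (hcov : ∀ j, j = j0 ∨ j = j1 ∨ j = j2) (f : Fin 3 → ℝ) :
    ∑ j, f j = f j0 + f j1 + f j2 := by
  have huniv : (univ : Finset (Fin 3)) = {j0, j1, j2} := by
    symm
    apply Finset.eq_univ_iff_forall.2
    intro j
    rcases hcov j with h | h | h <;> simp [h]
  rw [huniv, Finset.sum_insert (by simp [Ne.symm h1, Ne.symm h2]), Finset.sum_insert (by simp [h3]),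
    Finset.sum_singleton]
  ring


lemma qf_continuous (M : Matrix (Fin d) (Fin d) ℝ) :
    Continuous (fun w : Fin d → ℝ => w ⬝ᵥ M *ᵥ w) := by
  simp only [Matrix.mulVec, dotProduct]
  apply continuous_finset_sum
  intro i _
  apply Continuous.mul (continuous_apply i)
  apply continuous_finset_sum
  intro j _
  exact continuous_const.mul (continuous_apply j)

lemma qf_neg (M : Matrix (Fin d) (Fin d) ℝ) (w : Fin d → ℝ) :
    (-w) ⬝ᵥ M *ᵥ (-w) = w ⬝ᵥ M *ᵥ w := by
  rw [Matrix.mulVec_neg, dotProduct_neg, neg_dotProduct, neg_neg]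

set_option maxHeartbeats 1600000 in
/-- Brickman's theorem, existential form: for `d ≥ 3` the image of the unit sphere
under two quadratic forms is convex. -/
lemma brickman_exists (hd : 3 ≤ d) {M1 M2 : Matrix (Fin d) (Fin d) ℝ}
    (h1 : M1.IsSymm) (h2 : M2.IsSymm) {x y : Fin d → ℝ}
    (hx : x ⬝ᵥ x = 1) (hy : y ⬝ᵥ y = 1) {θ : ℝ} (hθ0 : 0 ≤ θ) (hθ1 : θ ≤ 1) :
    ∃ z : Fin d → ℝ, z ⬝ᵥ z = 1 ∧
      z ⬝ᵥ M1 *ᵥ z = (1-θ) * (x ⬝ᵥ M1 *ᵥ x) + θ * (y ⬝ᵥ M1 *ᵥ y) ∧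
      z ⬝ᵥ M2 *ᵥ z = (1-θ) * (x ⬝ᵥ M2 *ᵥ x) + θ * (y ⬝ᵥ M2 *ᵥ y) := by
  classical
  set a1 := x ⬝ᵥ M1 *ᵥ x with ha1
  set a2 := x ⬝ᵥ M2 *ᵥ x with ha2
  set b1 := y ⬝ᵥ M1 *ᵥ y with hb1
  set b2 := y ⬝ᵥ M2 *ᵥ y with hb2
  by_cases hab : a1 = b1 ∧ a2 = b2
  · exact ⟨x, hx, by rw [← ha1, hab.1]; ring, by rw [← ha2, hab.2]; ring⟩
  have hD : (b1 - a1) ≠ 0 ∨ (b2 - a2) ≠ 0 := by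
    rcases not_and_or.1 hab with h | h
    · exact Or.inl (sub_ne_zero.2 (Ne.symm h))
    · exact Or.inr (sub_ne_zero.2 (Ne.symm h))
  set D1 := b1 - a1 with hD1
  set D2 := b2 - a2 with hD2
  have hDD : 0 < D1^2 + D2^2 := by
    rcases hD with h | h
    · have := sq_nonneg D2; have := pow_pos (abs_pos.2 h) 2
      nlinarith [sq_abs D1]
    · have := sq_nonneg D1; have := pow_pos (abs_pos.2 h) 2
      nlinarith [sq_abs D2]
  set G : Matrix (Fin d) (Fin d) ℝ := D2 • M1 - D1 • M2 with hG
  set γ : ℝ := D2 * a1 - D1 * a2 with hγ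
  have hqG : ∀ w : Fin d → ℝ, w ⬝ᵥ G *ᵥ w
      = D2 * (w ⬝ᵥ M1 *ᵥ w) - D1 * (w ⬝ᵥ M2 *ᵥ w) := by
    intro w
    rw [hG, Matrix.sub_mulVec, dotProduct_sub, Matrix.smul_mulVec,
      Matrix.smul_mulVec, dotProduct_smul, dotProduct_smul, smul_eq_mul, smul_eq_mul]
  set Qm : Matrix (Fin d) (Fin d) ℝ := G - γ • (1 : Matrix (Fin d) (Fin d) ℝ) with hQm
  have hqQ : ∀ w : Fin d → ℝ, w ⬝ᵥ Qm *ᵥ w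
      = (D2 * (w ⬝ᵥ M1 *ᵥ w) - D1 * (w ⬝ᵥ M2 *ᵥ w)) - γ * (w ⬝ᵥ w) := by
    intro w
    rw [hQm, Matrix.sub_mulVec, dotProduct_sub, Matrix.smul_mulVec,
      dotProduct_smul, smul_eq_mul, Matrix.one_mulVec, hqG]
  have hQsym : Qm.IsSymm := by
    rw [Matrix.IsSymm] at h1 h2 ⊢
    rw [hQm, hG]
    rw [Matrix.transpose_sub, Matrix.transpose_sub, Matrix.transpose_smul,
      Matrix.transpose_smul, Matrix.transpose_smul, Matrix.transpose_one, h1, h2]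
  have hQx : x ⬝ᵥ Qm *ᵥ x = 0 := by rw [hqQ, hx, hγ, ← ha1, ← ha2]; ring
  have hQy : y ⬝ᵥ Qm *ᵥ y = 0 := by rw [hqQ, hy, hγ, ← hb1, ← hb2, hD1, hD2]; ring
  set S : Set (Fin d → ℝ) := {w | w ⬝ᵥ w = 1 ∧ w ⬝ᵥ Qm *ᵥ w = 0} with hS
  have main : ∀ w : Fin d → ℝ, JoinedIn S x w → w ⬝ᵥ M1 *ᵥ w = b1 →
      w ⬝ᵥ M2 *ᵥ w = b2 → ∃ z : Fin d → ℝ, z ⬝ᵥ z = 1 ∧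
      z ⬝ᵥ M1 *ᵥ z = (1-θ) * a1 + θ * b1 ∧ z ⬝ᵥ M2 *ᵥ z = (1-θ) * a2 + θ * b2 := by
    intro w hjoin hw1 hw2
    obtain ⟨γp, hγp⟩ := hjoin
    set f : unitInterval → ℝ := fun t =>
      D1 * ((γp t) ⬝ᵥ M1 *ᵥ (γp t)) + D2 * ((γp t) ⬝ᵥ M2 *ᵥ (γp t)) with hf
    have hfcont : Continuous f := by
      apply Continuous.add
      · exact continuous_const.mul ((qf_continuous M1).comp γp.continuous)
      · exact continuous_const.mul ((qf_continuous M2).comp γp.continuous)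
    have hf0 : f 0 = D1 * a1 + D2 * a2 := by
      rw [hf]; simp only [γp.source]; rfl
    have hf1 : f 1 = D1 * b1 + D2 * b2 := by
      rw [hf]; simp only [γp.target]; rw [hw1, hw2]
    set τ : ℝ := D1 * ((1-θ) * a1 + θ * b1) + D2 * ((1-θ) * a2 + θ * b2) with hτ
    have hτmem : τ ∈ Set.Icc (f 0) (f 1) ∪ Set.Icc (f 1) (f 0) := by
      rw [hf0, hf1, hτ]
      rcases le_total (D1 * a1 + D2 * a2) (D1 * b1 + D2 * b2) with hle | hle
      · left
        constructor <;> nlinarith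
      · right
        constructor <;> nlinarith
    have hexists : ∃ t : unitInterval, f t = τ := by
      rcases hτmem with hmem | hmem
      · have := intermediate_value_univ (0 : unitInterval) 1 hfcont
        obtain ⟨t, ht⟩ := this hmem
        exact ⟨t, ht⟩
      · have := intermediate_value_univ (1 : unitInterval) 0 hfcont
        obtain ⟨t, ht⟩ := this hmem
        exact ⟨t, ht⟩
    obtain ⟨t0, ht0⟩ := hexists
    set z := γp t0 with hz
    have hzS := hγp t0
    have hz1 : z ⬝ᵥ z = 1 := hzS.1
    have hzQ : z ⬝ᵥ Qm *ᵥ z = 0 := hzS.2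
    set p1 := z ⬝ᵥ M1 *ᵥ z with hp1
    set p2 := z ⬝ᵥ M2 *ᵥ z with hp2
    have eA : D2 * p1 - D1 * p2 = γ := by
      have := hqQ z
      rw [hzQ, hz1] at this
      rw [hp1, hp2]
      linarith [this]
    have eB : D1 * p1 + D2 * p2 = τ := by
      rw [← ht0, hf]
    have eAc : D2 * ((1-θ) * a1 + θ * b1) - D1 * ((1-θ) * a2 + θ * b2) = γ := by
      rw [hγ, hD1, hD2]; ring
    have eBc : D1 * ((1-θ) * a1 + θ * b1) + D2 * ((1-θ) * a2 + θ * b2) = τ := by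
      rw [hτ]
    have e1 : D2 * (p1 - ((1-θ) * a1 + θ * b1)) - D1 * (p2 - ((1-θ) * a2 + θ * b2)) = 0 := by
      linarith [eA, eAc]
    have e2 : D1 * (p1 - ((1-θ) * a1 + θ * b1)) + D2 * (p2 - ((1-θ) * a2 + θ * b2)) = 0 := by
      linarith [eB, eBc]
    have ee1 : (D1^2 + D2^2) * (p1 - ((1-θ) * a1 + θ * b1)) = 0 := by
      linear_combination D2 * e1 + D1 * e2
    have ee2 : (D1^2 + D2^2) * (p2 - ((1-θ) * a2 + θ * b2)) = 0 := by
      linear_combination D2 * e2 - D1 * e1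
    have hpc1 : p1 = (1-θ) * a1 + θ * b1 := by
      rcases mul_eq_zero.1 ee1 with hc | hc
      · exact absurd hc hDD.ne'
      · linarith [sub_eq_zero.1 hc]
    have hpc2 : p2 = (1-θ) * a2 + θ * b2 := by
      rcases mul_eq_zero.1 ee2 with hc | hc
      · exact absurd hc hDD.ne'
      · linarith [sub_eq_zero.1 hc]
    exact ⟨z, hz1, by rw [← hp1, hpc1], by rw [← hp2, hpc2]⟩
  rcases conn_sym hd hQsym hx hQx hy hQy with h | h
  · exact main y h hb1.symm hb2.symm
  · exact main (-y) h (by rw [qf_neg, ← hb1]) (by rw [qf_neg, ← hb2])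


end FEY

open FEY Finset

set_option maxHeartbeats 2000000 in
theorem further_extended_yuan (n m : ℕ) (hm : 1 ≤ m)
    (K : Set (Fin n → ℝ)) (V : Submodule ℝ (Fin n → ℝ))
    (hreg : K ∪ (-K) = (V : Set (Fin n → ℝ)))
    (hdim : 3 ≤ Module.finrank ℝ (Submodule.span ℝ K))
    (B : Fin m → Matrix (Fin n) (Fin n) ℝ)
    (A : Fin 3 → Matrix (Fin n) (Fin n) ℝ)
    (hBsym : ∀ i, (B i).IsSymm) (hAsym : ∀ j, (A j).IsSymm)
    (hgen : ∀ i, ∃ r : Fin 3 → ℝ, B i = ∑ j, r j • A j)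
    (hs : ∃ s : Fin 3 → ℝ, ∀ x ∈ K, x ≠ 0 →
        0 < ∑ j, s j * (x ⬝ᵥ (A j) *ᵥ x)) :
    (∀ x ∈ K, ∃ i, 0 ≤ x ⬝ᵥ (B i) *ᵥ x) ↔
    (∃ t : Fin m → ℝ, (∀ i, 0 ≤ t i) ∧ (∑ i, t i = 1) ∧
      ∀ x ∈ K, 0 ≤ ∑ i, t i * (x ⬝ᵥ (B i) *ᵥ x)) := by
  classical
  obtain ⟨s, hs⟩ := hs
  constructor
  · -- hard direction
    intro hI
    have hKV : K ⊆ (V : Set (Fin n → ℝ)) := by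
      intro x hx; rw [← hreg]; exact Or.inl hx
    have hVKK : ∀ x : Fin n → ℝ, x ∈ (V : Set (Fin n → ℝ)) → x ∈ K ∨ -x ∈ K := by
      intro x hx
      rw [← hreg] at hx
      rcases hx with h | h
      · exact Or.inl h
      · right; rwa [Set.mem_neg] at h
    have hspan : Submodule.span ℝ K = V := by
      apply le_antisymm
      · rw [Submodule.span_le]; exact hKV
      · intro x hx
        rcases hVKK x hx with h | h
        · exact Submodule.subset_span h
        · have h2 := Submodule.neg_mem (Submodule.span ℝ K)
            (Submodule.subset_span h : -x ∈ Submodule.span ℝ K)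
          rwa [neg_neg] at h2
    rw [hspan] at hdim
    have hIV : ∀ x ∈ (V : Set (Fin n → ℝ)), ∃ i, 0 ≤ x ⬝ᵥ B i *ᵥ x := by
      intro x hx
      rcases hVKK x hx with h | h
      · exact hI x h
      · obtain ⟨i, hi⟩ := hI (-x) h
        exact ⟨i, by rwa [qf_neg] at hi⟩
    have hsV : ∀ x ∈ (V : Set (Fin n → ℝ)), x ≠ 0 → 0 < ∑ j, s j * (x ⬝ᵥ A j *ᵥ x) := by
      intro x hx hx0
      rcases hVKK x hx with h | h
      · exact hs x h hx0
      · have h2 := hs (-x) h (neg_ne_zero.2 hx0)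
        simpa only [qf_neg] using h2
    -- the positive-definite bilinear form on V
    haveI : Invertible (2:ℝ) := invertibleOfNonzero two_ne_zero
    set Pb : LinearMap.BilinForm ℝ ↥V := LinearMap.mk₂ ℝ
      (fun x y : ↥V => ∑ j, s j * ((x : Fin n → ℝ) ⬝ᵥ A j *ᵥ (y : Fin n → ℝ)))
      (by
        intro x1 x2 y
        rw [← Finset.sum_add_distrib]
        apply Finset.sum_congr rfl
        intro j _
        rw [Submodule.coe_add, add_dotProduct]
        ring)
      (by
        intro c x y
        rw [Finset.smul_sum]
        apply Finset.sum_congr rfl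
        intro j _
        rw [Submodule.coe_smul, smul_dotProduct, smul_eq_mul, smul_eq_mul]
        ring)
      (by
        intro x y1 y2
        rw [← Finset.sum_add_distrib]
        apply Finset.sum_congr rfl
        intro j _
        rw [Submodule.coe_add, Matrix.mulVec_add, dotProduct_add]
        ring)
      (by
        intro c x y
        rw [Finset.smul_sum]
        apply Finset.sum_congr rfl
        intro j _
        rw [Submodule.coe_smul, Matrix.mulVec_smul, dotProduct_smul, smul_eq_mul, smul_eq_mul]
        ring) with hPbdef
    have hPbapp : ∀ x y : ↥V, Pb x y
        = ∑ j, s j * ((x : Fin n → ℝ) ⬝ᵥ A j *ᵥ (y : Fin n → ℝ)) := fun x y => rfl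
    have hPsym : Pb.IsSymm := by
      refine ⟨fun x y => ?_⟩
      rw [hPbapp, hPbapp]
      apply Finset.sum_congr rfl
      intro j _
      rw [bf_symm (hAsym j)]
    obtain ⟨vb, hvb⟩ := LinearMap.BilinForm.exists_orthogonal_basis (LinearMap.BilinForm.isSymm_iff.1 hPsym)
    have hpos : ∀ i, 0 < Pb (vb i) (vb i) := by
      intro i
      have hvne : ((vb i : ↥V) : Fin n → ℝ) ≠ 0 := by
        intro hcon
        exact vb.ne_zero i (by exact_mod_cast Subtype.ext hcon)
      exact hsV _ (vb i).2 hvne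
    set e : Fin (Module.finrank ℝ ↥V) → (Fin n → ℝ) :=
      fun i => (Real.sqrt (Pb (vb i) (vb i)))⁻¹ • ((vb i : Fin n → ℝ)) with hedef
    have heV : ∀ i, e i ∈ V := fun i => V.smul_mem _ (vb i).2
    have hsqpos : ∀ i, 0 < Real.sqrt (Pb (vb i) (vb i)) :=
      fun i => Real.sqrt_pos.2 (hpos i)
    have heval : ∀ i, e i = (Real.sqrt (Pb (vb i) (vb i)))⁻¹ • ((vb i : Fin n → ℝ)) := by
      intro i; rw [hedef]
    have hPP : ∀ k l, ∑ jA, s jA * (e k ⬝ᵥ A jA *ᵥ e l) = if k = l then 1 else 0 := by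
      intro k l
      have hscale : ∀ jA : Fin 3, e k ⬝ᵥ A jA *ᵥ e l
          = (Real.sqrt (Pb (vb k) (vb k)))⁻¹ * (Real.sqrt (Pb (vb l) (vb l)))⁻¹ *
            (((vb k : Fin n → ℝ)) ⬝ᵥ A jA *ᵥ ((vb l : Fin n → ℝ))) := by
        intro jA
        rw [heval k, heval l, Matrix.mulVec_smul, smul_dotProduct, dotProduct_smul,
          smul_eq_mul, smul_eq_mul]
        ring
      have hsum : ∑ jA, s jA * (e k ⬝ᵥ A jA *ᵥ e l)
          = (Real.sqrt (Pb (vb k) (vb k)))⁻¹ * (Real.sqrt (Pb (vb l) (vb l)))⁻¹ *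
            Pb (vb k) (vb l) := by
        rw [hPbapp (vb k) (vb l), Finset.mul_sum]
        apply Finset.sum_congr rfl
        intro jA _
        rw [hscale jA]
        ring
      rw [hsum]
      by_cases hkl : k = l
      · subst hkl
        rw [if_pos rfl]
        rw [show Pb (vb k) (vb k)
            = Real.sqrt (Pb (vb k) (vb k)) * Real.sqrt (Pb (vb k) (vb k)) from
          (Real.mul_self_sqrt (hpos k).le).symm]
        field_simp
        rw [Real.sqrt_sq (hsqpos k).le, div_self (pow_ne_zero 2 (hsqpos k).ne')]
      · rw [if_neg hkl, hvb hkl, mul_zero]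
    have hqmap : ∀ (M : Matrix (Fin n) (Fin n) ℝ) (c : Fin (Module.finrank ℝ ↥V) → ℝ),
        (∑ i, c i • e i) ⬝ᵥ M *ᵥ (∑ i, c i • e i)
          = c ⬝ᵥ (Matrix.of fun k l => e k ⬝ᵥ M *ᵥ e l) *ᵥ c := by
      intro M c
      have haux : ∀ (F : Fin (Module.finrank ℝ ↥V) → Fin (Module.finrank ℝ ↥V) → ℝ),
          ∑ k, ∑ l, c k * c l * F k l = c ⬝ᵥ (Matrix.of F) *ᵥ c := by
        intro F
        simp only [Matrix.mulVec, dotProduct, Matrix.of_apply, Finset.mul_sum]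
        apply Finset.sum_congr rfl
        intro k _
        apply Finset.sum_congr rfl
        intro l _
        ring
      rw [expand_qf]
      exact haux _
    have hφdot : ∀ c : Fin (Module.finrank ℝ ↥V) → ℝ,
        ∑ jA, s jA * ((∑ i, c i • e i) ⬝ᵥ A jA *ᵥ (∑ i, c i • e i)) = c ⬝ᵥ c := by
      intro c
      have hterm : ∀ k l, ∑ jA, s jA * (c k * c l * (e k ⬝ᵥ A jA *ᵥ e l))
          = c k * c l * (if k = l then 1 else 0) := by
        intro k l
        rw [← hPP k l, Finset.mul_sum]
        apply Finset.sum_congr rfl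
        intro jA _
        ring
      calc ∑ jA, s jA * ((∑ i, c i • e i) ⬝ᵥ A jA *ᵥ (∑ i, c i • e i))
          = ∑ jA, ∑ k, ∑ l, s jA * (c k * c l * (e k ⬝ᵥ A jA *ᵥ e l)) := by
            apply Finset.sum_congr rfl
            intro jA _
            rw [expand_qf, Finset.mul_sum]
            apply Finset.sum_congr rfl
            intro k _
            rw [Finset.mul_sum]
        _ = ∑ k, ∑ jA, ∑ l, s jA * (c k * c l * (e k ⬝ᵥ A jA *ᵥ e l)) := Finset.sum_comm
        _ = ∑ k, ∑ l, ∑ jA, s jA * (c k * c l * (e k ⬝ᵥ A jA *ᵥ e l)) := by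
            apply Finset.sum_congr rfl
            intro k _
            exact Finset.sum_comm
        _ = ∑ k, ∑ l, c k * c l * (if k = l then 1 else 0) := by
            apply Finset.sum_congr rfl
            intro k _
            apply Finset.sum_congr rfl
            intro l _
            exact hterm k l
        _ = ∑ k, c k * c k := by
            apply Finset.sum_congr rfl
            intro k _
            rw [Finset.sum_eq_single k]
            · simp
            · intro l _ hlk
              simp [Ne.symm hlk]
            · intro hk
              exact absurd (mem_univ k) hk
        _ = c ⬝ᵥ c := rfl
    have hφsurj : ∀ x : ↥V, ∃ c : Fin (Module.finrank ℝ ↥V) → ℝ,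
        ∑ i, c i • e i = (x : Fin n → ℝ) := by
      intro x
      refine ⟨fun i => vb.repr x i * Real.sqrt (Pb (vb i) (vb i)), ?_⟩
      have h1 : ∀ i, (vb.repr x i * Real.sqrt (Pb (vb i) (vb i))) • e i
          = vb.repr x i • ((vb i : Fin n → ℝ)) := by
        intro i
        rw [heval i, smul_smul]
        congr 1
        rw [mul_assoc, mul_inv_cancel₀ (hsqpos i).ne', mul_one]
      rw [Finset.sum_congr rfl (fun i _ => h1 i)]
      have h2 := vb.sum_repr x
      calc ∑ i, vb.repr x i • ((vb i : Fin n → ℝ))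
          = ((∑ i, vb.repr x i • vb i : ↥V) : Fin n → ℝ) := by
            rw [AddSubmonoidClass.coe_finset_sum]
            simp
          _ = (x : Fin n → ℝ) := by rw [h2]
    -- pulled-back matrices
    set NA : Fin 3 → Matrix (Fin (Module.finrank ℝ ↥V)) (Fin (Module.finrank ℝ ↥V)) ℝ :=
      fun jA => Matrix.of (fun k l => e k ⬝ᵥ A jA *ᵥ e l) with hNAdef
    set NB : Fin m → Matrix (Fin (Module.finrank ℝ ↥V)) (Fin (Module.finrank ℝ ↥V)) ℝ :=
      fun i => Matrix.of (fun k l => e k ⬝ᵥ B i *ᵥ e l) with hNBdef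
    have hNAsym : ∀ jA, (NA jA).IsSymm := by
      intro jA
      show (NA jA)ᵀ = NA jA
      ext k l
      simp only [hNAdef, Matrix.transpose_apply, Matrix.of_apply]
      exact bf_symm (hAsym jA) _ _
    have hqA : ∀ (c : Fin (Module.finrank ℝ ↥V) → ℝ) (jA : Fin 3),
        (∑ i, c i • e i) ⬝ᵥ A jA *ᵥ (∑ i, c i • e i) = c ⬝ᵥ NA jA *ᵥ c :=
      fun c jA => hqmap (A jA) c
    have hqB : ∀ (c : Fin (Module.finrank ℝ ↥V) → ℝ) (i : Fin m),
        (∑ i, c i • e i) ⬝ᵥ B i *ᵥ (∑ i, c i • e i) = c ⬝ᵥ NB i *ᵥ c :=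
      fun c i => hqmap (B i) c
    have hrel : ∀ c : Fin (Module.finrank ℝ ↥V) → ℝ,
        ∑ jA, s jA * (c ⬝ᵥ NA jA *ᵥ c) = c ⬝ᵥ c := by
      intro c
      rw [← hφdot c]
      apply Finset.sum_congr rfl
      intro jA _
      rw [hqA c jA]
    have hDpos : 0 < Module.finrank ℝ ↥V := lt_of_lt_of_le (by norm_num) hdim
    set c0 : Fin (Module.finrank ℝ ↥V) → ℝ :=
      fun i => if i = (⟨0, hDpos⟩ : Fin (Module.finrank ℝ ↥V)) then 1 else 0 with hc0def
    have hc0 : c0 ⬝ᵥ c0 = 1 := by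
      rw [dotProduct]
      rw [Finset.sum_eq_single (⟨0, hDpos⟩ : Fin (Module.finrank ℝ ↥V))]
      · simp [hc0def]
      · intro l _ hl
        simp [hc0def, hl]
      · intro hk
        exact absurd (mem_univ _) hk
    have hs0 : ∃ j0, s j0 ≠ 0 := by
      by_contra hall
      push_neg at hall
      have h1 := hrel c0
      rw [hc0] at h1
      rw [Finset.sum_eq_zero (fun jA _ => by rw [hall jA]; ring)] at h1
      norm_num at h1
    obtain ⟨j0, hj0⟩ := hs0
    obtain ⟨j1, j2, hj1, hj2, hj12, hcov⟩ := fin3_cover j0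
    have hZstep : ∀ (u w : Fin (Module.finrank ℝ ↥V) → ℝ), u ⬝ᵥ u = 1 → w ⬝ᵥ w = 1 →
        ∀ θ:ℝ, 0 ≤ θ → θ ≤ 1 →
        ∃ z, z ⬝ᵥ z = 1 ∧ ∀ jA, z ⬝ᵥ NA jA *ᵥ z
          = (1-θ) * (u ⬝ᵥ NA jA *ᵥ u) + θ * (w ⬝ᵥ NA jA *ᵥ w) := by
      intro u w hu hw θ hθ0 hθ1
      obtain ⟨z, hz, hz1, hz2⟩ := brickman_exists hdim (hNAsym j1) (hNAsym j2) hu hw hθ0 hθ1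
      refine ⟨z, hz, ?_⟩
      have hj0eq : z ⬝ᵥ NA j0 *ᵥ z
          = (1-θ) * (u ⬝ᵥ NA j0 *ᵥ u) + θ * (w ⬝ᵥ NA j0 *ᵥ w) := by
        have hu' := hrel u
        have hw' := hrel w
        have hz' := hrel z
        rw [sum_fin3 hj1 hj2 hj12 hcov] at hu' hw' hz'
        rw [hu] at hu'
        rw [hw] at hw'
        rw [hz, hz1, hz2] at hz'
        have h5 : s j0 * (z ⬝ᵥ NA j0 *ᵥ z)
            = s j0 * ((1-θ) * (u ⬝ᵥ NA j0 *ᵥ u) + θ * (w ⬝ᵥ NA j0 *ᵥ w)) := by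
          linear_combination hz' - (1-θ) * hu' - θ * hw'
        exact mul_left_cancel₀ hj0 h5
      intro jA
      rcases hcov jA with rfl | rfl | rfl
      exacts [hj0eq, hz1, hz2]
    set Z : Set (Fin m → ℝ) :=
      {zv | ∃ c : Fin (Module.finrank ℝ ↥V) → ℝ, c ⬝ᵥ c = 1 ∧
        zv = fun i => c ⬝ᵥ NB i *ᵥ c} with hZdef
    have hNBlin : ∀ i, ∃ r : Fin 3 → ℝ, ∀ c : Fin (Module.finrank ℝ ↥V) → ℝ,
        c ⬝ᵥ NB i *ᵥ c = ∑ jA, r jA * (c ⬝ᵥ NA jA *ᵥ c) := by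
      intro i
      obtain ⟨r, hr⟩ := hgen i
      refine ⟨r, fun c => ?_⟩
      rw [← hqB c i, hr, FEY.sum_mulVec, dot_sum_right]
      apply Finset.sum_congr rfl
      intro jA _
      rw [Matrix.smul_mulVec, dotProduct_smul, smul_eq_mul, hqA c jA]
    have hZconvex : Convex ℝ Z := by
      intro z1 hz1 z2 hz2 a b ha hb hab
      obtain ⟨u, hu, hz1e⟩ := hz1
      obtain ⟨w, hw, hz2e⟩ := hz2
      obtain ⟨z, hz, hzq⟩ := hZstep u w hu hw b hb (by linarith)
      refine ⟨z, hz, ?_⟩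
      funext i
      obtain ⟨r, hri⟩ := hNBlin i
      have hzv : z ⬝ᵥ NB i *ᵥ z
          = (1-b) * (u ⬝ᵥ NB i *ᵥ u) + b * (w ⬝ᵥ NB i *ᵥ w) := by
        rw [hri z, hri u, hri w, Finset.mul_sum, Finset.mul_sum, ← Finset.sum_add_distrib]
        apply Finset.sum_congr rfl
        intro jA _
        rw [hzq jA]
        ring
      have hab' : a = 1 - b := by linarith
      show a • z1 i + b • z2 i = z ⬝ᵥ NB i *ᵥ z
      rw [hzv, hz1e, hz2e, hab', smul_eq_mul, smul_eq_mul]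
    set O : Set (Fin m → ℝ) := {w | ∀ i, w i < 0} with hOdef
    have hOiInter : O = ⋂ i, {w : Fin m → ℝ | w i < 0} := by
      ext w
      simp [hOdef, Set.mem_iInter]
    have hOopen : IsOpen O := by
      rw [hOiInter]
      exact isOpen_iInter_of_finite
        (fun i => IsOpen.preimage (continuous_apply i) isOpen_Iio)
    have hOconv : Convex ℝ O := by
      rw [hOiInter]
      exact convex_iInter (fun i =>
        convex_halfSpace_lt ⟨fun a b => rfl, fun c a => rfl⟩ 0)
    have hdisj : Disjoint O Z := by
      rw [Set.disjoint_left]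
      rintro zv hzvO ⟨c, hc, rfl⟩
      have hφV : (∑ i, c i • e i) ∈ V := sum_mem (fun i _ => V.smul_mem _ (heV i))
      have hφne : (∑ i, c i • e i) ≠ 0 := by
        intro h0
        have h1 := hφdot c
        rw [h0] at h1
        rw [Finset.sum_eq_zero (fun jA _ => by
          rw [Matrix.mulVec_zero, dotProduct_zero, mul_zero])] at h1
        rw [hc] at h1
        norm_num at h1
      obtain ⟨i, hi⟩ := hIV _ hφV
      rw [hqB c i] at hi
      exact absurd (hzvO i) (not_lt.2 hi)
    obtain ⟨f, u0, hfO, hfZ⟩ := geometric_hahn_banach_open hOconv hOopen hZconvex hdisj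
    set tp : Fin m → ℝ := fun i => f (fun j => if i = j then (1:ℝ) else 0) with htpdef
    have hfrepr : ∀ w : Fin m → ℝ, f w = ∑ i, w i * tp i := by
      intro w
      conv_lhs => rw [pi_eq_sum_univ w]
      rw [map_sum]
      apply Finset.sum_congr rfl
      intro i _
      rw [_root_.map_smul, smul_eq_mul]
    have htp0 : ∀ i, 0 ≤ tp i := by
      intro i
      by_contra hneg
      push_neg at hneg
      set Er : ℝ := ∑ j ∈ univ.erase i, tp j with hErdef
      set cc : ℝ := max 1 ((u0 + Er) / (-tp i) + 1) with hccdef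
      have hcc1 : 1 ≤ cc := le_max_left _ _
      have hccge : (u0 + Er) / (-tp i) + 1 ≤ cc := le_max_right _ _
      have hmem : (fun j => if j = i then -cc else -1) ∈ O := by
        intro j
        show (if j = i then -cc else -1) < 0
        by_cases hj : j = i
        · rw [if_pos hj]; linarith
        · rw [if_neg hj]; norm_num
      have hlt := hfO _ hmem
      rw [hfrepr] at hlt
      rw [← Finset.add_sum_erase _ _ (mem_univ i)] at hlt
      rw [if_pos rfl] at hlt
      have hrest : ∑ j ∈ univ.erase i, (if j = i then -cc else -1) * tp j = -Er := by
        rw [hErdef, ← Finset.sum_neg_distrib]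
        apply Finset.sum_congr rfl
        intro j hj
        rw [if_neg (Finset.mem_erase.1 hj).1]
        ring
      rw [hrest] at hlt
      -- hlt : -cc * tp i + -Er < u0
      have hkey : ((u0 + Er) / (-tp i) + 1) * (-tp i) ≤ cc * (-tp i) := by
        apply mul_le_mul_of_nonneg_right hccge
        linarith
      have hexp : ((u0 + Er) / (-tp i) + 1) * (-tp i) = u0 + Er + (-tp i) := by
        have hne : (-tp i) ≠ 0 := ne_of_gt (by linarith : (0:ℝ) < -tp i)
        rw [add_mul, one_mul, div_mul_cancel₀ _ hne]
      nlinarith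
    have hu00 : 0 ≤ u0 := by
      by_contra hneg
      push_neg at hneg
      set Sp : ℝ := ∑ i, tp i with hSpdef
      have hSpnn : 0 ≤ Sp := Finset.sum_nonneg (fun i _ => htp0 i)
      set ε : ℝ := -u0 / (2 * (Sp + 1)) with hεdef
      have hεpos : 0 < ε := by
        apply div_pos (by linarith)
        linarith
      have hmem : (fun _ : Fin m => -ε) ∈ O := by
        intro i
        show -ε < 0
        linarith
      have hlt := hfO _ hmem
      rw [hfrepr] at hlt
      have hsum : ∑ i, (-ε) * tp i = -ε * Sp := by
        rw [hSpdef, Finset.mul_sum]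
      rw [hsum] at hlt
      have h1 : ε * (2 * (Sp + 1)) = -u0 := by
        rw [hεdef]
        exact div_mul_cancel₀ _ (by positivity : (0:ℝ) < 2 * (Sp + 1)).ne'
      nlinarith
    have hSppos : 0 < ∑ i, tp i := by
      rcases lt_or_eq_of_le (Finset.sum_nonneg (fun i _ => htp0 i)) with h | h
      · exact h
      exfalso
      have hz0 : ∀ i, tp i = 0 := by
        intro i
        have := (Finset.sum_eq_zero_iff_of_nonneg (fun j _ => htp0 j)).1 h.symm i (mem_univ i)
        exact this
      have hf0 : ∀ w : Fin m → ℝ, f w = 0 := by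
        intro w
        rw [hfrepr]
        exact Finset.sum_eq_zero (fun i _ => by rw [hz0 i, mul_zero])
      have hOlt := hfO (fun _ => -1) (by
        intro i
        show (-1 : ℝ) < 0
        norm_num)
      rw [hf0] at hOlt
      have hZmem : (fun i => c0 ⬝ᵥ NB i *ᵥ c0) ∈ Z := ⟨c0, hc0, rfl⟩
      have hZle := hfZ _ hZmem
      rw [hf0] at hZle
      linarith
    refine ⟨fun i => tp i / (∑ i, tp i), fun i => div_nonneg (htp0 i) hSppos.le, ?_, ?_⟩
    · rw [← Finset.sum_div]
      exact div_self hSppos.ne'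
    intro x hxK
    have hxV := hKV hxK
    by_cases hx0 : x = 0
    · subst hx0
      apply le_of_eq
      symm
      apply Finset.sum_eq_zero
      intro i _
      rw [Matrix.mulVec_zero, dotProduct_zero, mul_zero]
    · have hqP := hsV x hxV hx0
      have hρpos : 0 < Real.sqrt (∑ j, s j * (x ⬝ᵥ A j *ᵥ x)) := Real.sqrt_pos.2 hqP
      set ρ : ℝ := Real.sqrt (∑ j, s j * (x ⬝ᵥ A j *ᵥ x)) with hρdef
      have hx'V : ρ⁻¹ • x ∈ V := V.smul_mem _ hxV
      obtain ⟨c, hc⟩ := hφsurj ⟨ρ⁻¹ • x, hx'V⟩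
      have hcc : c ⬝ᵥ c = 1 := by
        rw [← hφdot c, hc]
        show ∑ jA, s jA * ((ρ⁻¹ • x) ⬝ᵥ A jA *ᵥ (ρ⁻¹ • x)) = 1
        have hstep : ∀ jA : Fin 3, s jA * ((ρ⁻¹ • x) ⬝ᵥ A jA *ᵥ (ρ⁻¹ • x))
            = (ρ⁻¹)^2 * (s jA * (x ⬝ᵥ A jA *ᵥ x)) := by
          intro jA
          rw [qf_smul (A jA) (ρ⁻¹) x]
          ring
        rw [Finset.sum_congr rfl (fun jA _ => hstep jA), ← Finset.mul_sum]
        rw [show ∑ j, s j * (x ⬝ᵥ A j *ᵥ x) = ρ^2 from (Real.sq_sqrt hqP.le).symm]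
        field_simp
      have hmemZ : (fun i => c ⬝ᵥ NB i *ᵥ c) ∈ Z := ⟨c, hcc, rfl⟩
      have h1 := hfZ _ hmemZ
      rw [hfrepr] at h1
      have h2 : 0 ≤ ∑ i, tp i * (c ⬝ᵥ NB i *ᵥ c) := by
        rw [Finset.sum_congr rfl (fun i (_ : i ∈ univ) => mul_comm (tp i) (c ⬝ᵥ NB i *ᵥ c))]
        linarith
      have h3 : ∀ i, c ⬝ᵥ NB i *ᵥ c = (ρ⁻¹)^2 * (x ⬝ᵥ B i *ᵥ x) := by
        intro i
        rw [← hqB c i, hc]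
        exact qf_smul (B i) (ρ⁻¹) x
      have h4 : 0 ≤ ∑ i, tp i * (x ⬝ᵥ B i *ᵥ x) := by
        have heq : ∑ i, tp i * (c ⬝ᵥ NB i *ᵥ c)
            = (ρ⁻¹)^2 * ∑ i, tp i * (x ⬝ᵥ B i *ᵥ x) := by
          rw [Finset.mul_sum]
          apply Finset.sum_congr rfl
          intro i _
          rw [h3 i]
          ring
        rw [heq] at h2
        have hinv : 0 < (ρ⁻¹)^2 := by positivity
        nlinarith
      rw [show ∑ i, tp i / (∑ i, tp i) * (x ⬝ᵥ B i *ᵥ x)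
          = (∑ i, tp i * (x ⬝ᵥ B i *ᵥ x)) / (∑ i, tp i) from by
        rw [Finset.sum_div]
        apply Finset.sum_congr rfl
        intro i _
        rw [div_mul_eq_mul_div]]
      exact div_nonneg h4 hSppos.le
  · -- easy direction
    rintro ⟨t, ht0, ht1, ht2⟩ x hxK
    by_contra hcon
    push_neg at hcon
    have hipos : ∃ i, 0 < t i := by
      by_contra hnp
      push_neg at hnp
      have : ∑ i, t i ≤ 0 := Finset.sum_nonpos (fun i _ => hnp i)
      rw [ht1] at this
      linarith
    obtain ⟨i0, hi0⟩ := hipos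
    have hlt : ∑ i, t i * (x ⬝ᵥ B i *ᵥ x) < ∑ i : Fin m, (0:ℝ) := by
      apply Finset.sum_lt_sum
      · intro i _
        exact mul_nonpos_of_nonneg_of_nonpos (ht0 i) (le_of_lt (hcon i))
      · exact ⟨i0, mem_univ i0, mul_neg_of_pos_of_neg hi0 (hcon i0)⟩
    rw [Finset.sum_const_zero] at hlt
    linarith [ht2 x hxK]
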